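/- Let D be a finite set, f : D → {0,1} with f⁻¹(1) nonempty, H a finite-dimensional complex inner product space, and for each x ∈ D a unitary O_x on H with O_x² = I; let H(x) denote the +1-eigenspace of O_x. Suppose that for each x with f(x) = 1 a vector w_x⁺ ∈ H(x) is given, for each y with f(y) = 0 a vector w_y⁻ ∈ H(y)^⊥ is given, and ⟨w_x⁺, w_y⁻⟩ = 1 whenever f(x) = 1 and f(y) = 0. Then there exist a subspace K ⊆ H and a vector w₀ ∈ K^⊥ such that: for every x with f(x) = 1, w_x⁺ − w₀ ∈ K (hence w₀ ∈ K + H(x)); and for every y with f(y) = 0, w_y⁻ ⊥ K and ⟨w₀, w_y⁻⟩ = 1 (hence w₀ ∉ K + H(y)). -/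

import Mathlib

open scoped InnerProductSpace

/-- span program from a hyperedge problem.  Given involutive unitaries
`O_x` with `+1`-eigenspaces `H(x)`, vectors `w_x⁺ ∈ H(x)` for `f x = 1`, vectors
`w_y⁻ ∈ H(y)ᗮ` for `f y = 0` (here `f : D → Bool`, `true` standing for `1`), with
`⟪w_x⁺, w_y⁻⟫ = 1` whenever `f x = 1` and `f y = 0`, there exist a subspace `K ⊆ H` and a
vector `w₀ ∈ Kᗮ` forming a span program `(H, x ↦ H(x), K, w₀)` computing `f`, whose positive
and negative witnesses are the given `w_x⁺` and `w_y⁻`. -/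
theorem span_program_from_hyperedge
    {D : Type*} [Fintype D]
    {H : Type*} [NormedAddCommGroup H] [InnerProductSpace ℂ H] [FiniteDimensional ℂ H]
    (f : D → Bool) (hf : ∃ x, f x = true)
    (O : D → (H →ₗ[ℂ] H))
    (hOunitary : ∀ x (u v : H), ⟪O x u, O x v⟫_ℂ = ⟪u, v⟫_ℂ)
    (hOinv : ∀ x (v : H), O x (O x v) = v)
    (wp wm : D → H)
    (hwp : ∀ x, f x = true → wp x ∈ Module.End.eigenspace (O x) 1)
    (hwm : ∀ y, f y = false → wm y ∈ (Module.End.eigenspace (O y) 1)ᗮ)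
    (hcross : ∀ x y, f x = true → f y = false → ⟪wp x, wm y⟫_ℂ = 1) :
    ∃ (K : Submodule ℂ H) (w₀ : H), w₀ ∈ Kᗮ ∧
      (∀ x, f x = true →
        wp x - w₀ ∈ K ∧ w₀ ∈ K ⊔ Module.End.eigenspace (O x) 1) ∧
      (∀ y, f y = false →
        wm y ∈ Kᗮ ∧ ⟪w₀, wm y⟫_ℂ = 1 ∧ w₀ ∉ K ⊔ Module.End.eigenspace (O y) 1) := by

  classical
  obtain ⟨x₀, hx₀⟩ := hf
  set K : Submodule ℂ H := Submodule.span ℂ {v | ∃ x, f x = true ∧ v = wp x - wp x₀} with hK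
  haveI : CompleteSpace K := FiniteDimensional.complete ℂ K
  set w₀ : H := wp x₀ - (K.orthogonalProjectionOnto (wp x₀) : H) with hw₀
  have hw₀K : w₀ ∈ Kᗮ := Submodule.sub_starProjection_mem_orthogonal (K := K) _
  have hwmK : ∀ y, f y = false → wm y ∈ Kᗮ := by
    intro y hy
    rw [Submodule.mem_orthogonal]
    intro u hu
    induction hu using Submodule.span_induction with
    | mem v hv =>
      obtain ⟨x, hx, rfl⟩ := hv
      rw [inner_sub_left, hcross x y hx hy, hcross x₀ y hx₀ hy, sub_self]
    | zero => simp
    | add a b _ _ ha hb => rw [inner_add_left, ha, hb, add_zero]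
    | smul c a _ ha => rw [inner_smul_left, ha, mul_zero]
  refine ⟨K, w₀, hw₀K, ?_, ?_⟩
  · intro x hx
    have h1 : wp x - w₀ ∈ K := by
      have : wp x - w₀ = (wp x - wp x₀) + (K.orthogonalProjectionOnto (wp x₀) : H) := by
        rw [hw₀]; abel
      rw [this]
      exact K.add_mem (Submodule.subset_span ⟨x, hx, rfl⟩)
        (K.orthogonalProjectionOnto (wp x₀)).2
    refine ⟨h1, ?_⟩
    have : w₀ = (-(wp x - w₀)) + wp x := by abel
    rw [this]
    exact Submodule.add_mem_sup (K.neg_mem h1) (hwp x hx)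
  · intro y hy
    have hK0 : ∀ u ∈ K, ⟪u, wm y⟫_ℂ = 0 := (Submodule.mem_orthogonal _ _).mp (hwmK y hy)
    have hinner : ⟪w₀, wm y⟫_ℂ = 1 := by
      rw [hw₀, inner_sub_left, hcross x₀ y hx₀ hy,
        hK0 _ (K.orthogonalProjectionOnto (wp x₀)).2, sub_zero]
    refine ⟨hwmK y hy, hinner, ?_⟩
    intro hmem
    obtain ⟨k, hk, h', hh', hsum⟩ := Submodule.mem_sup.mp hmem
    have : ⟪w₀, wm y⟫_ℂ = 0 := by
      rw [← hsum, inner_add_left, hK0 k hk,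
        (Submodule.mem_orthogonal _ _).mp (hwm y hy) h' hh', add_zero]
    rw [hinner] at this
    exact one_ne_zero this
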